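/- Let τ̂, t_f > 0 and y₀ ∈ ℝ. Among all C¹ functions ŷ : [0,∞) → ℝ with ŷ(0) = y₀ for which the improper integral J(ŷ) = ∫₀^∞ (ŷ'(t)² + Δ²(ŷ'(t) + τ^{−1}ŷ(t))²) dt converges (Δ > 0, τ̂ = τ√(1+Δ^{−2})), the unique minimizer is ŷ(t) = y₀ e^{−t/τ̂}. -/

import Mathlib

open MeasureTheory

open Set Filter Topology in
/-- Complete-the-square decomposition of the entropy functional on the infinite horizon:
for any admissible `y`, the squared "stable-mode" residual is integrable and
`J(y) = (1+Δ²)·∫ (y' + τ̂⁻¹ y)² − c·y(0)²` where `c = Δ²/τ − (1+Δ²)/τ̂`. -/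
lemma aux_square_infinite_horizon (τ Δ τh : ℝ) (hτ : 0 < τ) (hΔ : 0 < Δ) (hτhpos : 0 < τh)
    (hτh2 : τh ^ 2 * Δ ^ 2 = τ ^ 2 * (1 + Δ ^ 2))
    (y : ℝ → ℝ) (hy : ContDiff ℝ 1 y)
    (hInt : IntegrableOn
      (fun t => (deriv y t) ^ 2 + Δ ^ 2 * (deriv y t + τ⁻¹ * y t) ^ 2) (Set.Ioi 0)) :
    IntegrableOn (fun t => (deriv y t + τh⁻¹ * y t) ^ 2) (Set.Ioi 0) ∧
    (∫ t in Set.Ioi (0:ℝ), ((deriv y t) ^ 2 + Δ ^ 2 * (deriv y t + τ⁻¹ * y t) ^ 2))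
      = (1 + Δ ^ 2) * (∫ t in Set.Ioi (0:ℝ), (deriv y t + τh⁻¹ * y t) ^ 2)
        - (Δ ^ 2 / τ - (1 + Δ ^ 2) / τh) * (y 0) ^ 2 := by
  have hτ0 : τ ≠ 0 := ne_of_gt hτ
  have hτh0 : τh ≠ 0 := ne_of_gt hτhpos
  have hΔ0 : Δ ≠ 0 := ne_of_gt hΔ
  have hdy : Continuous (deriv y) := hy.continuous_deriv le_rfl
  have hyc : Continuous y := hy.continuous
  -- integrability of pieces
  have h1 : IntegrableOn (fun t => (deriv y t) ^ 2) (Set.Ioi 0) := by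
    refine hInt.mono' ((hdy.pow 2).aestronglyMeasurable) (ae_of_all _ fun t => ?_)
    rw [Real.norm_eq_abs, abs_of_nonneg (sq_nonneg _)]
    nlinarith [sq_nonneg (deriv y t + τ⁻¹ * y t), sq_nonneg Δ, sq_nonneg (Δ * (deriv y t + τ⁻¹ * y t))]
  have h2 : IntegrableOn (fun t => (deriv y t + τ⁻¹ * y t) ^ 2) (Set.Ioi 0) := by
    refine (hInt.const_mul (Δ⁻¹ ^ 2)).mono'
      (((hdy.add (continuous_const.mul hyc)).pow 2).aestronglyMeasurable)
      (ae_of_all _ fun t => ?_)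
    rw [Real.norm_eq_abs, abs_of_nonneg (sq_nonneg _)]
    have h : Δ⁻¹ ^ 2 * (Δ ^ 2 * (deriv y t + τ⁻¹ * y t) ^ 2)
        = (deriv y t + τ⁻¹ * y t) ^ 2 := by field_simp
    nlinarith [sq_nonneg (deriv y t), sq_nonneg Δ⁻¹, sq_nonneg (Δ⁻¹ * deriv y t)]
  have hy2 : IntegrableOn (fun t => (y t) ^ 2) (Set.Ioi 0) := by
    refine ((h1.const_mul (2 * τ ^ 2)).add (h2.const_mul (2 * τ ^ 2))).mono'
      ((hyc.pow 2).aestronglyMeasurable) (ae_of_all _ fun t => ?_)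
    rw [Real.norm_eq_abs, abs_of_nonneg (sq_nonneg _)]
    have h : (y t) ^ 2 = (τ * (deriv y t + τ⁻¹ * y t) - τ * deriv y t) ^ 2 := by
      congr 1; field_simp; ring
    simp only [Pi.add_apply]
    nlinarith [h, sq_nonneg (τ * (deriv y t + τ⁻¹ * y t) + τ * deriv y t)]
  have hyy : IntegrableOn (fun t => y t * deriv y t) (Set.Ioi 0) := by
    refine (hy2.add h1).mono' ((hyc.mul hdy).aestronglyMeasurable)
      (ae_of_all _ fun t => ?_)
    rw [Real.norm_eq_abs, abs_mul]
    simp only [Pi.add_apply]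
    nlinarith [two_mul_le_add_sq |y t| |deriv y t|, sq_abs (y t), sq_abs (deriv y t),
      abs_nonneg (y t), abs_nonneg (deriv y t)]
  have hsq : IntegrableOn (fun t => (deriv y t + τh⁻¹ * y t) ^ 2) (Set.Ioi 0) := by
    refine ((h1.const_mul 2).add (hy2.const_mul (2 * τh⁻¹ ^ 2))).mono'
      (((hdy.add (continuous_const.mul hyc)).pow 2).aestronglyMeasurable)
      (ae_of_all _ fun t => ?_)
    rw [Real.norm_eq_abs, abs_of_nonneg (sq_nonneg _)]
    simp only [Pi.add_apply]
    nlinarith [sq_nonneg (deriv y t - τh⁻¹ * y t)]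
  refine ⟨hsq, ?_⟩
  set c : ℝ := Δ ^ 2 / τ - (1 + Δ ^ 2) / τh with hc
  -- pointwise complete-the-square identity
  have hpt : ∀ t, (deriv y t) ^ 2 + Δ ^ 2 * (deriv y t + τ⁻¹ * y t) ^ 2
      = (1 + Δ ^ 2) * (deriv y t + τh⁻¹ * y t) ^ 2 + (2 * c) * (y t * deriv y t) := by
    intro t
    rw [hc]
    field_simp
    linear_combination (y t) ^ 2 * hτh2
  -- FTC on finite intervals
  have hFTC : ∀ T : ℝ, (∫ t in (0:ℝ)..T, y t * deriv y t) = (y T) ^ 2 / 2 - (y 0) ^ 2 / 2 := by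
    intro T
    have hd : ∀ t ∈ Set.uIcc (0:ℝ) T, HasDerivAt (fun s => (y s) ^ 2 / 2) (y t * deriv y t) t := by
      intro t _
      have := (((hy.differentiable one_ne_zero) t).hasDerivAt).pow 2
      have h2 := this.div_const 2
      refine h2.congr_deriv ?_
      push_cast
      ring
    exact intervalIntegral.integral_eq_sub_of_hasDerivAt hd
      ((hyc.mul hdy).intervalIntegrable _ _)
  -- limit of the boundary term
  set Y : ℝ := ∫ t in Set.Ioi (0:ℝ), y t * deriv y t with hY
  have htend : Tendsto (fun T => (y T) ^ 2 / 2 - (y 0) ^ 2 / 2) atTop (𝓝 Y) := by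
    have := MeasureTheory.intervalIntegral_tendsto_integral_Ioi 0 hyy tendsto_id
    refine this.congr fun T => hFTC T
  have hyT : Tendsto (fun T => (y T) ^ 2) atTop (𝓝 (2 * Y + (y 0) ^ 2)) := by
    have h := (htend.const_mul 2).add_const ((y 0) ^ 2)
    refine h.congr fun T => by ring
  set L : ℝ := 2 * Y + (y 0) ^ 2 with hL
  have hLzero : L = 0 := by
    by_contra hL0
    have hLnn : 0 ≤ L := ge_of_tendsto hyT (Eventually.of_forall fun T => sq_nonneg _)
    have hLpos : 0 < L := lt_of_le_of_ne hLnn (Ne.symm hL0)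
    have hev : ∀ᶠ T in atTop, L / 2 ≤ (y T) ^ 2 :=
      hyT.eventually (eventually_ge_nhds (by linarith))
    obtain ⟨T₀, hT₀⟩ := hev.exists_forall_of_atTop
    set T₁ : ℝ := max T₀ 0 with hT₁
    have hsub : Set.Ioi T₁ ⊆ Set.Ioi (0:ℝ) := Set.Ioi_subset_Ioi (le_max_right _ _)
    have hconst : IntegrableOn (fun _ : ℝ => L / 2) (Set.Ioi T₁) := by
      refine (hy2.mono_set hsub).mono' aestronglyMeasurable_const ?_
      refine (ae_restrict_iff' measurableSet_Ioi).2 (ae_of_all _ fun t ht => ?_)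
      rw [Real.norm_eq_abs, abs_of_pos (by linarith)]
      exact hT₀ t (le_trans (le_max_left _ _) (le_of_lt ht))
    rw [integrableOn_const_iff] at hconst
    rcases hconst with h | h
    · simp at h; linarith
    · simp [Real.volume_Ioi] at h
  have hYval : Y = -(y 0) ^ 2 / 2 := by rw [hL] at hLzero; linarith
  -- assemble
  have hfun : (fun t => (deriv y t) ^ 2 + Δ ^ 2 * (deriv y t + τ⁻¹ * y t) ^ 2)
      = fun t => (1 + Δ ^ 2) * (deriv y t + τh⁻¹ * y t) ^ 2 + (2 * c) * (y t * deriv y t) :=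
    funext hpt
  rw [hfun, integral_add (hsq.const_mul _) (hyy.const_mul _),
    integral_const_mul, integral_const_mul, ← hY, hYval]
  ring

/-- Infinite-horizon near-equilibrium entropy minimization: among all C¹ functions
with `ŷ(0) = y₀` for which `J(ŷ) = ∫₀^∞ (ŷ'² + Δ²(ŷ' + τ⁻¹ŷ)²) dt` converges, the
unique minimizer is `ŷ(t) = y₀ e^{−t/τ̂}` with `τ̂ = τ√(1 + Δ⁻²)`. -/
theorem infinite_horizon_unique_minimizer
    (τ Δ y₀ : ℝ) (hτ : 0 < τ) (hΔ : 0 < Δ)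
    (τh : ℝ) (hτh : τh = τ * Real.sqrt (1 + Δ⁻¹ ^ 2))
    (ystar : ℝ → ℝ) (hystar : ∀ t, ystar t = y₀ * Real.exp (-(t / τh))) :
    IntegrableOn
      (fun t => (deriv ystar t) ^ 2 + Δ ^ 2 * (deriv ystar t + τ⁻¹ * ystar t) ^ 2)
      (Set.Ioi 0) ∧
    ∀ y : ℝ → ℝ, ContDiff ℝ 1 y → y 0 = y₀ →
      IntegrableOn
        (fun t => (deriv y t) ^ 2 + Δ ^ 2 * (deriv y t + τ⁻¹ * y t) ^ 2)
        (Set.Ioi 0) →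
      (∫ t in Set.Ioi (0:ℝ),
          ((deriv ystar t) ^ 2 + Δ ^ 2 * (deriv ystar t + τ⁻¹ * ystar t) ^ 2))
        ≤ ∫ t in Set.Ioi (0:ℝ),
            ((deriv y t) ^ 2 + Δ ^ 2 * (deriv y t + τ⁻¹ * y t) ^ 2) ∧
      ((∫ t in Set.Ioi (0:ℝ),
          ((deriv y t) ^ 2 + Δ ^ 2 * (deriv y t + τ⁻¹ * y t) ^ 2))
        = ∫ t in Set.Ioi (0:ℝ),
            ((deriv ystar t) ^ 2 + Δ ^ 2 * (deriv ystar t + τ⁻¹ * ystar t) ^ 2) →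
        ∀ t ≥ 0, y t = ystar t) := by
  have hfunstar : ystar = fun t => y₀ * Real.exp (-(t / τh)) := funext hystar
  subst hfunstar
  have hΔ0 : Δ ≠ 0 := ne_of_gt hΔ
  have hτ0 : τ ≠ 0 := ne_of_gt hτ
  have harg : (0:ℝ) < 1 + Δ⁻¹ ^ 2 := by positivity
  have hτhpos : 0 < τh := by
    rw [hτh]; exact mul_pos hτ (Real.sqrt_pos.2 harg)
  have hτh0 : τh ≠ 0 := ne_of_gt hτhpos
  have hτh2 : τh ^ 2 * Δ ^ 2 = τ ^ 2 * (1 + Δ ^ 2) := by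
    rw [hτh, mul_pow, Real.sq_sqrt (le_of_lt harg)]
    field_simp
    ring
  -- derivative of the candidate minimizer
  have hdstar : ∀ t, HasDerivAt (fun t => y₀ * Real.exp (-(t / τh)))
      (-(τh⁻¹) * (y₀ * Real.exp (-(t / τh)))) t := by
    intro t
    have h1 : HasDerivAt (fun t : ℝ => -(t / τh)) (-(1 / τh)) t :=
      ((hasDerivAt_id t).div_const τh).neg
    have h2 := (Real.hasDerivAt_exp (-(t / τh))).comp t h1
    have h3 := h2.const_mul y₀
    refine h3.congr_deriv ?_
    ring
  have hderiv_star : ∀ t, deriv (fun t => y₀ * Real.exp (-(t / τh))) t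
      = -(τh⁻¹) * (y₀ * Real.exp (-(t / τh))) := fun t => (hdstar t).deriv
  have hODEstar : ∀ t, deriv (fun t => y₀ * Real.exp (-(t / τh))) t
      + τh⁻¹ * (y₀ * Real.exp (-(t / τh))) = 0 := by
    intro t; rw [hderiv_star t]; ring
  have hCDstar : ContDiff ℝ 1 (fun t => y₀ * Real.exp (-(t / τh))) :=
    contDiff_const.mul ((Real.contDiff_exp.of_le le_top).comp ((contDiff_id.div_const τh).neg))
  -- integrability of the candidate's functional
  have hFstar : ∀ t, (deriv (fun t => y₀ * Real.exp (-(t / τh))) t) ^ 2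
      + Δ ^ 2 * (deriv (fun t => y₀ * Real.exp (-(t / τh))) t
          + τ⁻¹ * (y₀ * Real.exp (-(t / τh)))) ^ 2
      = ((τh⁻¹) ^ 2 + Δ ^ 2 * (τ⁻¹ - τh⁻¹) ^ 2) * y₀ ^ 2 * Real.exp (-(2 / τh) * t) := by
    intro t
    rw [hderiv_star t]
    have he : Real.exp (-(2 / τh) * t) = Real.exp (-(t / τh)) ^ 2 := by
      rw [show (-(2 / τh) * t) = ((2:ℕ) : ℝ) * (-(t / τh)) by push_cast; ring,
        Real.exp_nat_mul]
    rw [he]; ring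
  have hIntstar : IntegrableOn
      (fun t => (deriv (fun t => y₀ * Real.exp (-(t / τh))) t) ^ 2
        + Δ ^ 2 * (deriv (fun t => y₀ * Real.exp (-(t / τh))) t
            + τ⁻¹ * (y₀ * Real.exp (-(t / τh)))) ^ 2) (Set.Ioi 0) := by
    rw [funext hFstar]
    exact (exp_neg_integrableOn_Ioi 0 (by positivity)).const_mul _
  refine ⟨hIntstar, ?_⟩
  -- value of the functional at the candidate
  obtain ⟨-, hformstar⟩ := aux_square_infinite_horizon τ Δ τh hτ hΔ hτhpos hτh2 _ hCDstar hIntstar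
  have hstar0 : (fun t => y₀ * Real.exp (-(t / τh))) 0 = y₀ := by simp
  have hSstar : (∫ t in Set.Ioi (0:ℝ),
      (deriv (fun t => y₀ * Real.exp (-(t / τh))) t
        + τh⁻¹ * (y₀ * Real.exp (-(t / τh)))) ^ 2) = 0 := by
    have : (fun t => (deriv (fun t => y₀ * Real.exp (-(t / τh))) t
        + τh⁻¹ * (y₀ * Real.exp (-(t / τh)))) ^ 2) = fun _ => (0:ℝ) := by
      funext t; rw [hODEstar t]; ring
    rw [this]; simp
  rw [hSstar, mul_zero, zero_sub] at hformstar
  simp only [zero_div, neg_zero, Real.exp_zero, mul_one] at hformstar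
  -- the general competitor
  intro y hy hy0 hInty
  beta_reduce
  obtain ⟨hsqy, hformy⟩ := aux_square_infinite_horizon τ Δ τh hτ hΔ hτhpos hτh2 y hy hInty
  have hSnn : 0 ≤ ∫ t in Set.Ioi (0:ℝ), (deriv y t + τh⁻¹ * y t) ^ 2 :=
    setIntegral_nonneg measurableSet_Ioi fun t _ => sq_nonneg _
  have haΔ : (0:ℝ) < 1 + Δ ^ 2 := by positivity
  constructor
  · rw [hformstar, hformy, hy0]
    nlinarith [mul_nonneg (le_of_lt haΔ) hSnn]
  · intro heq t ht
    -- equality forces the residual integral to vanish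
    have hS0 : (∫ t in Set.Ioi (0:ℝ), (deriv y t + τh⁻¹ * y t) ^ 2) = 0 := by
      rw [hformy, hformstar, hy0] at heq
      have h1 : (1 + Δ ^ 2) * (∫ t in Set.Ioi (0:ℝ), (deriv y t + τh⁻¹ * y t) ^ 2) = 0 := by
        linarith
      rcases mul_eq_zero.1 h1 with h | h
      · linarith
      · exact h
    -- hence the residual is identically zero on [0, ∞)
    have hres_ae : (fun t => (deriv y t + τh⁻¹ * y t) ^ 2)
        =ᵐ[MeasureTheory.volume.restrict (Set.Ioi (0:ℝ))] 0 :=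
      (integral_eq_zero_iff_of_nonneg (fun t => sq_nonneg _) hsqy).1 hS0
    have hdy : Continuous (deriv y) := hy.continuous_deriv le_rfl
    have hyc : Continuous y := hy.continuous
    have hrescont : Continuous (fun t => (deriv y t + τh⁻¹ * y t) ^ 2) :=
      (hdy.add (continuous_const.mul hyc)).pow 2
    have hres_ae' : (fun t => (deriv y t + τh⁻¹ * y t) ^ 2)
        =ᵐ[MeasureTheory.volume.restrict (Set.Ici (0:ℝ))] 0 := by
      rwa [MeasureTheory.Measure.restrict_congr_set MeasureTheory.Ioi_ae_eq_Ici] at hres_ae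
    have hresEq : Set.EqOn (fun t => (deriv y t + τh⁻¹ * y t) ^ 2) 0 (Set.Ici 0) :=
      Measure.eqOn_of_ae_eq hres_ae' hrescont.continuousOn continuousOn_const
        (by rw [interior_Ici, closure_Ioi])
    have hODE : ∀ s : ℝ, 0 ≤ s → deriv y s + τh⁻¹ * y s = 0 := by
      intro s hs
      have := hresEq (Set.mem_Ici.2 hs)
      simpa using pow_eq_zero_iff (n := 2) (by norm_num) |>.1 this
    -- solve the ODE: y(s)·e^{s/τ̂} is constant on [0, t]
    have hd : ∀ s : ℝ, HasDerivAt (fun s => y s * Real.exp (s / τh))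
        ((deriv y s + τh⁻¹ * y s) * Real.exp (s / τh)) s := by
      intro s
      have he : HasDerivAt (fun s : ℝ => Real.exp (s / τh)) (Real.exp (s / τh) * (1 / τh)) s :=
        (Real.hasDerivAt_exp _).comp s ((hasDerivAt_id s).div_const τh)
      have hm := ((hy.differentiable one_ne_zero s).hasDerivAt).mul he
      refine hm.congr_deriv ?_
      ring
    have hconst : y t * Real.exp (t / τh) = y 0 * Real.exp (0 / τh) := by
      have hcont : ContinuousOn (fun s => y s * Real.exp (s / τh)) (Set.Icc 0 t) :=
        (hyc.mul (Real.continuous_exp.comp (continuous_id.div_const τh))).continuousOn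
      have hder : ∀ s ∈ Set.Ico (0:ℝ) t, HasDerivWithinAt
          (fun s => y s * Real.exp (s / τh)) 0 (Set.Ici s) s := by
        intro s hs
        have h0 : (deriv y s + τh⁻¹ * y s) * Real.exp (s / τh) = 0 := by
          rw [hODE s hs.1]; ring
        exact (h0 ▸ (hd s)).hasDerivWithinAt
      exact constant_of_has_deriv_right_zero hcont hder t ⟨ht, le_rfl⟩
    have hexp0 : Real.exp ((0:ℝ) / τh) = 1 := by norm_num
    rw [hexp0, mul_one, hy0] at hconst
    have hxne : Real.exp (t / τh) ≠ 0 := Real.exp_ne_zero _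
    show y t = y₀ * Real.exp (-(t / τh))
    rw [Real.exp_neg]
    field_simp
    linarith [hconst]
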